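/- For s ∈ [0,1], n×n matrices A, E, and integer ℓ ≥ 0, with B = [[A, I],[0,0]], one has exp((1-s)B) = [[exp((1-s)A), (1-s)·φ_1((1-s)A)],[0, I]] and φ_ℓ(s(B+Ẽ)) = [[φ_ℓ(s(A+E)), s·φ_{ℓ+1}(s(A+E))],[0, (1/ℓ!)·I]], where Ẽ = [[E,0],[0,0]]. -/

import Mathlib

open Matrix

/-- The matrix φ-functions: `φ_ℓ(M) = Σ_{k=0}^∞ M^k/(k+ℓ)!`, so `φ_0 = exp`. -/
noncomputable def phiM {m : Type*} [Fintype m] [DecidableEq m] (ℓ : ℕ)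
    (M : Matrix m m ℝ) : Matrix m m ℝ :=
  ∑' k : ℕ, ((Nat.factorial (k + ℓ) : ℝ))⁻¹ • M ^ k

attribute [local instance] Matrix.linftyOpNormedRing Matrix.linftyOpNormedAlgebra

private lemma summable_phi_aux {m : Type*} [Fintype m] [DecidableEq m] (ℓ : ℕ)
    (M : Matrix m m ℝ) :
    Summable (fun k : ℕ => ((Nat.factorial (k + ℓ) : ℝ))⁻¹ • M ^ k) := by
  apply Summable.of_norm_bounded
    (g := fun k => (‖(1 : Matrix m m ℝ)‖ + 1) * (‖M‖ ^ k / (Nat.factorial k : ℝ)))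
    (((Real.summable_pow_div_factorial ‖M‖)).mul_left _)
  intro k
  rw [norm_smul]
  have h1 : ‖((Nat.factorial (k + ℓ) : ℝ))⁻¹‖ ≤ ((Nat.factorial k : ℝ))⁻¹ := by
    rw [Real.norm_eq_abs, abs_of_nonneg (by positivity)]
    apply inv_anti₀ (by positivity)
    exact_mod_cast Nat.factorial_le (Nat.le_add_right k ℓ)
  have h2 : ‖M ^ k‖ ≤ (‖(1 : Matrix m m ℝ)‖ + 1) * ‖M‖ ^ k := by
    rcases Nat.eq_zero_or_pos k with hk | hk
    · subst hk; simp
    · calc ‖M ^ k‖ ≤ ‖M‖ ^ k := norm_pow_le' M hk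
        _ ≤ (‖(1 : Matrix m m ℝ)‖ + 1) * ‖M‖ ^ k := by
            nlinarith [norm_nonneg (1 : Matrix m m ℝ), pow_nonneg (norm_nonneg M) k]
  calc ‖((Nat.factorial (k + ℓ) : ℝ))⁻¹‖ * ‖M ^ k‖
      ≤ ((Nat.factorial k : ℝ))⁻¹ * ((‖(1 : Matrix m m ℝ)‖ + 1) * ‖M‖ ^ k) :=
        mul_le_mul h1 h2 (norm_nonneg _) (by positivity)
    _ = (‖(1 : Matrix m m ℝ)‖ + 1) * (‖M‖ ^ k / (Nat.factorial k : ℝ)) := by ring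

private lemma pow_block_aux {n : ℕ} (C : Matrix (Fin n) (Fin n) ℝ) :
    ∀ k : ℕ, (Matrix.fromBlocks C 1 0 0 :
        Matrix (Fin n ⊕ Fin n) (Fin n ⊕ Fin n) ℝ) ^ (k + 1) =
      Matrix.fromBlocks (C ^ (k + 1)) (C ^ k) 0 0 := by
  intro k
  induction k with
  | zero => simp
  | succ k ih =>
    rw [pow_succ, ih, Matrix.fromBlocks_multiply, ← pow_succ]
    simp

private noncomputable def blockTL (n : ℕ) :
    Matrix (Fin n) (Fin n) ℝ →L[ℝ] Matrix (Fin n ⊕ Fin n) (Fin n ⊕ Fin n) ℝ :=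
  LinearMap.toContinuousLinearMap
    { toFun := fun a => Matrix.fromBlocks a 0 0 0
      map_add' := fun a b => by rw [Matrix.fromBlocks_add]; simp
      map_smul' := fun c a => by rw [RingHom.id_apply, Matrix.fromBlocks_smul]; simp }

private noncomputable def blockTR (n : ℕ) :
    Matrix (Fin n) (Fin n) ℝ →L[ℝ] Matrix (Fin n ⊕ Fin n) (Fin n ⊕ Fin n) ℝ :=
  LinearMap.toContinuousLinearMap
    { toFun := fun b => Matrix.fromBlocks 0 b 0 0
      map_add' := fun a b => by rw [Matrix.fromBlocks_add]; simp
      map_smul' := fun c a => by rw [RingHom.id_apply, Matrix.fromBlocks_smul]; simp }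

private lemma tsum_fromBlocks_aux {n : ℕ} (a b : ℕ → Matrix (Fin n) (Fin n) ℝ)
    (ha : Summable a) (hb : Summable b) :
    ∑' k, (Matrix.fromBlocks (a k) (b k) 0 0 :
        Matrix (Fin n ⊕ Fin n) (Fin n ⊕ Fin n) ℝ) =
      Matrix.fromBlocks (∑' k, a k) (∑' k, b k) 0 0 := by
  have key : ∀ x y : Matrix (Fin n) (Fin n) ℝ,
      (Matrix.fromBlocks x y 0 0 : Matrix (Fin n ⊕ Fin n) (Fin n ⊕ Fin n) ℝ) =
        blockTL n x + blockTR n y := by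
    intro x y
    show Matrix.fromBlocks x y 0 0 =
      Matrix.fromBlocks x 0 0 0 + Matrix.fromBlocks 0 y 0 0
    rw [Matrix.fromBlocks_add]
    simp
  have haL : Summable (fun k => blockTL n (a k)) := (blockTL n).summable ha
  have hbR : Summable (fun k => blockTR n (b k)) := (blockTR n).summable hb
  simp only [key]
  rw [Summable.tsum_add haL hbR, (blockTL n).map_tsum ha, (blockTR n).map_tsum hb]

private lemma phiM_block_key {n : ℕ} (t : ℝ) (C : Matrix (Fin n) (Fin n) ℝ) (ℓ : ℕ) :
    phiM ℓ (t • Matrix.fromBlocks C 1 0 0) =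
      Matrix.fromBlocks (phiM ℓ (t • C)) (t • phiM (ℓ + 1) (t • C)) 0
        (((Nat.factorial ℓ : ℝ))⁻¹ • (1 : Matrix (Fin n) (Fin n) ℝ)) := by
  set M : Matrix (Fin n ⊕ Fin n) (Fin n ⊕ Fin n) ℝ := Matrix.fromBlocks C 1 0 0 with hM
  have ha : Summable (fun k : ℕ =>
      ((Nat.factorial (k + 1 + ℓ) : ℝ))⁻¹ • (t • C) ^ (k + 1)) := by
    have := (summable_nat_add_iff 1).mpr (summable_phi_aux ℓ (t • C))
    exact this.congr fun k => rfl
  have hb : Summable (fun k : ℕ =>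
      ((Nat.factorial (k + 1 + ℓ) : ℝ))⁻¹ • t ^ (k + 1) • C ^ k) := by
    apply ((summable_phi_aux (ℓ + 1) (t • C)).const_smul t).congr
    intro k
    have hk : k + (ℓ + 1) = k + 1 + ℓ := by omega
    rw [hk, smul_pow, smul_comm t, smul_smul t, ← pow_succ']
  have hL : phiM ℓ (t • M) =
      Matrix.fromBlocks
        (((Nat.factorial ℓ : ℝ))⁻¹ • 1 + ∑' k : ℕ,
          ((Nat.factorial (k + 1 + ℓ) : ℝ))⁻¹ • (t • C) ^ (k + 1))
        (∑' k : ℕ, ((Nat.factorial (k + 1 + ℓ) : ℝ))⁻¹ • t ^ (k + 1) • C ^ k)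
        0 (((Nat.factorial ℓ : ℝ))⁻¹ • 1) := by
    rw [phiM, Summable.tsum_eq_zero_add (summable_phi_aux ℓ (t • M))]
    have hterm : ∀ k : ℕ, ((Nat.factorial (k + 1 + ℓ) : ℝ))⁻¹ • (t • M) ^ (k + 1) =
        Matrix.fromBlocks (((Nat.factorial (k + 1 + ℓ) : ℝ))⁻¹ • (t • C) ^ (k + 1))
          (((Nat.factorial (k + 1 + ℓ) : ℝ))⁻¹ • t ^ (k + 1) • C ^ k) 0 0 := by
      intro k
      rw [hM, smul_pow, pow_block_aux, smul_pow t C, Matrix.fromBlocks_smul,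
        Matrix.fromBlocks_smul]
      simp
    simp only [hterm]
    rw [tsum_fromBlocks_aux _ _ ha hb, pow_zero, zero_add,
      (Matrix.fromBlocks_one (l := Fin n) (m := Fin n) (α := ℝ)).symm,
      Matrix.fromBlocks_smul, Matrix.fromBlocks_add]
    simp
  have hTL : phiM ℓ (t • C) = ((Nat.factorial ℓ : ℝ))⁻¹ • 1 +
      ∑' k : ℕ, ((Nat.factorial (k + 1 + ℓ) : ℝ))⁻¹ • (t • C) ^ (k + 1) := by
    rw [phiM, Summable.tsum_eq_zero_add (summable_phi_aux ℓ (t • C)), pow_zero, zero_add]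
  have hTR : t • phiM (ℓ + 1) (t • C) =
      ∑' k : ℕ, ((Nat.factorial (k + 1 + ℓ) : ℝ))⁻¹ • t ^ (k + 1) • C ^ k := by
    rw [phiM, ← Summable.tsum_const_smul t (summable_phi_aux (ℓ + 1) (t • C))]
    apply tsum_congr
    intro k
    have hk : k + (ℓ + 1) = k + 1 + ℓ := by omega
    rw [hk, smul_pow, smul_comm t, smul_smul t, ← pow_succ']
  rw [hL, hTL, hTR]

theorem phiM_block_scaled {n : ℕ} (s : ℝ) (hs : s ∈ Set.Icc (0:ℝ) 1)
    (A E : Matrix (Fin n) (Fin n) ℝ) (ℓ : ℕ)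
    (B : Matrix (Fin n ⊕ Fin n) (Fin n ⊕ Fin n) ℝ)
    (hB : B = Matrix.fromBlocks A (1 : Matrix (Fin n) (Fin n) ℝ) 0 0)
    (Et : Matrix (Fin n ⊕ Fin n) (Fin n ⊕ Fin n) ℝ)
    (hEt : Et = Matrix.fromBlocks E 0 0 0) :
    phiM 0 ((1 - s) • B) =
      Matrix.fromBlocks (phiM 0 ((1 - s) • A)) ((1 - s) • phiM 1 ((1 - s) • A)) 0
        (1 : Matrix (Fin n) (Fin n) ℝ) ∧
    phiM ℓ (s • (B + Et)) =
      Matrix.fromBlocks (phiM ℓ (s • (A + E))) (s • phiM (ℓ + 1) (s • (A + E))) 0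
        (((Nat.factorial ℓ : ℝ))⁻¹ • (1 : Matrix (Fin n) (Fin n) ℝ)) := by
  constructor
  · rw [hB, phiM_block_key (1 - s) A 0]
    norm_num
  · have hBE : B + Et = Matrix.fromBlocks (A + E) 1 0 0 := by
      rw [hB, hEt, Matrix.fromBlocks_add]; simp
    rw [hBE, phiM_block_key s (A + E) ℓ]
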